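/- Fix $k \ge 1$. The unique solution $\chi(q,z_1,z_2)$ of the difference equation $\chi(q,z_1,z_2) = M(q,z_1,z_2)\chi(q,z_1,qz_2)$, $\chi_{i,l}(q,z_1,0) = \delta_{i,0}\delta_{l,0}$, has components which are formal power series in $q$ with coefficients in $\mathbb{Z}_{\ge 0}[z_1,z_2]$ (polynomials in $z_1, z_2$ with non-negative integer coefficients). -/

import Mathlib

open MvPowerSeries

namespace DiffEqn

/-- Index set: pairs `(i,l)` with `0 ≤ i ≤ l ≤ k`. -/
abbrev PairIdx (k : ℕ) := {p : Fin (k + 1) × Fin (k + 1) // p.1 ≤ p.2}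

/-- Formal power series in `q = X 0`, `z₁ = X 1`, `z₂ = X 2` over `ℂ`. -/
abbrev R := MvPowerSeries (Fin 3) ℂ

/-- The entry `M_{i,l}^{i',l'}` of `M(q,z₁,z₂)` (inequalities written additively
to avoid truncated subtraction). -/
noncomputable def Ment (k i l i' l' : ℕ) : R :=
  if l ≤ i' + i ∧ i' ≤ l' ∧ l' + i ≤ k then
    ((X 0 : R) * X 1 * X 2) ^ (l' - i') * (X 2 : R) ^ i
  else if i' + i < l ∧ l ≤ l' + i ∧ l' + i ≤ k then
    ((X 0 : R) * X 1 * X 2) ^ (l' + i - l) * (X 2 : R) ^ i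
  else 0

/-- The shift `S : f(q,z₁,z₂) ↦ f(q,z₁,qz₂)`, defined on coefficients:
the coefficient of `q^α z₁^β z₂^γ` in `S f` is that of `q^{α-γ} z₁^β z₂^γ` in `f`. -/
noncomputable def S (f : R) : R := fun d =>
  if d 2 ≤ d 0 then MvPowerSeries.coeff (d.update 0 (d 0 - d 2)) f else 0


/-- exponent of the monomial `(q z₁ z₂)^a z₂^i` -/
noncomputable def E (a i : ℕ) : Fin 3 →₀ ℕ :=
  Finsupp.single 0 a + Finsupp.single 1 a + Finsupp.single 2 (a + i)

@[simp] lemma E_apply0 (a i : ℕ) : E a i 0 = a := by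
  simp [E, Finsupp.single_apply]
@[simp] lemma E_apply1 (a i : ℕ) : E a i 1 = a := by
  simp [E, Finsupp.single_apply]
@[simp] lemma E_apply2 (a i : ℕ) : E a i 2 = a + i := by
  simp [E, Finsupp.single_apply]

lemma prodX (a i : ℕ) :
    ((X 0 : R) * X 1 * X 2) ^ a * (X 2 : R) ^ i = monomial (E a i) 1 := by
  rw [mul_pow, mul_pow, X_pow_eq, X_pow_eq, X_pow_eq, X_pow_eq,
    monomial_mul_monomial, monomial_mul_monomial, monomial_mul_monomial]
  congr 1
  · rw [E, add_assoc, ← Finsupp.single_add]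
  · ring

noncomputable def D (d : Fin 3 →₀ ℕ) (a i : ℕ) : Fin 3 →₀ ℕ :=
  Finsupp.single 0 (d 0 + i - d 2) + Finsupp.single 1 (d 1 - a)
    + Finsupp.single 2 (d 2 - (a + i))

@[simp] lemma D_apply0 (d : Fin 3 →₀ ℕ) (a i : ℕ) : D d a i 0 = d 0 + i - d 2 := by
  simp [D, Finsupp.single_apply]
@[simp] lemma D_apply1 (d : Fin 3 →₀ ℕ) (a i : ℕ) : D d a i 1 = d 1 - a := by
  simp [D, Finsupp.single_apply]
@[simp] lemma D_apply2 (d : Fin 3 →₀ ℕ) (a i : ℕ) : D d a i 2 = d 2 - (a + i) := by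
  simp [D, Finsupp.single_apply]

lemma coeff_mon_S (a i : ℕ) (f : R) (d : Fin 3 →₀ ℕ) :
    MvPowerSeries.coeff d ((monomial (E a i)) 1 * S f) =
      if a ≤ d 0 ∧ a ≤ d 1 ∧ a + i ≤ d 2 ∧ d 2 ≤ d 0 + i then
        MvPowerSeries.coeff (D d a i) f else 0 := by
  rw [coeff_monomial_mul]
  by_cases h1 : E a i ≤ d
  · rw [if_pos h1, one_mul]
    rw [Finsupp.le_def] at h1
    have h0 := h1 0
    have h2 := h1 1
    have h3 := h1 2
    simp only [E_apply0, E_apply1, E_apply2] at h0 h2 h3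
    have hsub : ∀ j, (d - E a i) j = d j - E a i j := fun j => Finsupp.tsub_apply d _ j
    rw [show MvPowerSeries.coeff (d - E a i) (S f) = S f (d - E a i) from rfl]
    rw [S]
    simp only [hsub, E_apply0, E_apply2]
    by_cases h4 : d 2 - (a + i) ≤ d 0 - a
    · rw [if_pos h4, if_pos ⟨h0, h2, h3, by omega⟩]
      have hidx : (d - E a i).update 0 ((d - E a i) 0 - (d - E a i) 2) = D d a i := by
        ext j
        have hupd : ∀ (v : ℕ) (j : Fin 3), ((d - E a i).update 0 v) j
            = if j = 0 then v else (d - E a i) j := by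
          intro v j
          rw [Finsupp.coe_update, Function.update_apply]
        fin_cases j <;> simp [hupd, hsub] <;> omega
      rw [hsub, hsub, E_apply0, E_apply2] at hidx
      rw [hidx]
    · rw [if_neg h4, if_neg (by omega)]
  · rw [if_neg h1, if_neg]
    intro hc
    apply h1
    rw [Finsupp.le_def]
    intro j
    fin_cases j <;> simp <;> omega

lemma Ment_eq (k i l i' l' : ℕ) :
    Ment k i l i' l' = 0 ∨ ∃ a, Ment k i l i' l' = monomial (E a i) 1 := by
  rw [Ment]
  split_ifs
  · exact Or.inr ⟨l' - i', prodX _ _⟩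
  · exact Or.inr ⟨l' + i - l, prodX _ _⟩
  · exact Or.inl rfl

/-- The components of the unique solution `χ` of the difference equation
`χ(q,z₁,z₂) = M(q,z₁,z₂)χ(q,z₁,qz₂)`, `χ_{i,l}(q,z₁,0) = δ_{i,0}δ_{l,0}`, are
power series in `q` whose coefficients are polynomials in `z₁,z₂` with
non-negative integer coefficients. -/
theorem solution_coeff_nonneg (k : ℕ) (hk : 1 ≤ k)
    (χ : PairIdx k → R)
    (heq : ∀ p : PairIdx k, χ p =
      ∑ p' : PairIdx k,
        Ment k (p.1.1 : ℕ) (p.1.2 : ℕ) (p'.1.1 : ℕ) (p'.1.2 : ℕ) * S (χ p'))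
    (hinit : ∀ (p : PairIdx k) (d : Fin 3 →₀ ℕ), d 2 = 0 →
      MvPowerSeries.coeff d (χ p) =
        if (p.1.1 : ℕ) = 0 ∧ (p.1.2 : ℕ) = 0 ∧ d = 0 then 1 else 0) :
    (∀ (p : PairIdx k) (d : Fin 3 →₀ ℕ),
      ∃ c : ℕ, MvPowerSeries.coeff d (χ p) = (c : ℂ)) ∧
    (∀ (p : PairIdx k) (n : ℕ),
      {d : Fin 3 →₀ ℕ | d 0 = n ∧ MvPowerSeries.coeff d (χ p) ≠ 0}.Finite) := by
  have main : ∀ N : ℕ, ∀ d : Fin 3 →₀ ℕ, d 0 + d 2 < N → ∀ p : PairIdx k,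
      (∃ c : ℕ, MvPowerSeries.coeff d (χ p) = (c : ℂ)) ∧
      (MvPowerSeries.coeff d (χ p) ≠ 0 → d 1 ≤ d 0 ∧ d 2 ≤ d 0 + k) := by
    intro N
    induction N with
    | zero => intro d hd; omega
    | succ N ih =>
      intro d hd p
      by_cases hz : d 2 = 0
      · rw [hinit p d hz]
        constructor
        · split_ifs
          · exact ⟨1, Nat.cast_one.symm⟩
          · exact ⟨0, Nat.cast_zero.symm⟩
        · intro hne
          split_ifs at hne with hcond
          · obtain ⟨-, -, h0⟩ := hcond
            subst h0
            simp
          · exact absurd rfl hne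
      · -- d 2 ≥ 1
        have hterm : ∀ p' : PairIdx k,
            (∃ c : ℕ, MvPowerSeries.coeff d
              (Ment k (p.1.1 : ℕ) (p.1.2 : ℕ) (p'.1.1 : ℕ) (p'.1.2 : ℕ) * S (χ p')) = (c : ℂ)) ∧
            (MvPowerSeries.coeff d
              (Ment k (p.1.1 : ℕ) (p.1.2 : ℕ) (p'.1.1 : ℕ) (p'.1.2 : ℕ) * S (χ p')) ≠ 0 →
              d 1 ≤ d 0 ∧ d 2 ≤ d 0 + k) := by
          intro p'
          rcases Ment_eq k (p.1.1 : ℕ) (p.1.2 : ℕ) (p'.1.1 : ℕ) (p'.1.2 : ℕ) with hM | ⟨a, hM⟩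
          · rw [hM, zero_mul, map_zero]
            exact ⟨⟨0, Nat.cast_zero.symm⟩, fun h => absurd rfl h⟩
          · rw [hM, coeff_mon_S]
            split_ifs with hc
            · obtain ⟨hc1, hc2, hc3, hc4⟩ := hc
              have hi : (p.1.1 : ℕ) ≤ k := by omega
              have hmeas : D d a (p.1.1 : ℕ) 0 + D d a (p.1.1 : ℕ) 2 < N := by
                rw [D_apply0, D_apply2]; omega
              obtain ⟨h1, h2⟩ := ih (D d a (p.1.1 : ℕ)) hmeas p'
              refine ⟨h1, fun hne => ?_⟩
              have h3 := h2 hne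
              rw [D_apply0, D_apply1, D_apply2] at h3
              omega
            · exact ⟨⟨0, Nat.cast_zero.symm⟩, fun h => absurd rfl h⟩
        constructor
        · choose c hc using fun p' => (hterm p').1
          refine ⟨∑ p' : PairIdx k, c p', ?_⟩
          rw [heq p, map_sum, Nat.cast_sum]
          exact Finset.sum_congr rfl fun p' _ => hc p'
        · intro hne
          rw [heq p, map_sum] at hne
          obtain ⟨p', -, hp'⟩ := Finset.exists_ne_zero_of_sum_ne_zero hne
          exact (hterm p').2 hp'
  constructor
  · intro p d
    exact (main (d 0 + d 2 + 1) d (by omega) p).1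
  · intro p n
    have hfin : ((Set.Iic n) ×ˢ (Set.Iic (n + k))).Finite :=
      (Set.finite_Iic n).prod (Set.finite_Iic (n + k))
    refine (hfin.image (fun bc : ℕ × ℕ =>
      Finsupp.single (0 : Fin 3) n + Finsupp.single 1 bc.1 + Finsupp.single 2 bc.2)).subset ?_
    rintro d ⟨hd0, hdne⟩
    obtain ⟨-, hb⟩ := main (d 0 + d 2 + 1) d (by omega) p
    obtain ⟨h1, h2⟩ := hb hdne
    have h1' : d 1 ≤ n := hd0 ▸ h1
    have h2' : d 2 ≤ n + k := by omega
    refine ⟨(d 1, d 2), ⟨Set.mem_Iic.mpr h1', Set.mem_Iic.mpr h2'⟩, ?_⟩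
    ext j
    fin_cases j <;> simp [Finsupp.single_apply, hd0.symm]

end DiffEqn
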